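/- arXiv:2007.06303 — 2 statements merged into one kernel-verified Lean document; each statement's English description precedes it below -/
import Mathlib

section
/- Let φ : (0,a) → ℝ be a differentiable solution of the ODE (|φ'(s)|^(p-2) θ(s)^(N-1) φ'(s))' + λ θ(s)^(N-1) |φ(s)|^(p-2) φ(s) = 0 on (0,a), for 1 < p < ∞, where θ(s) > 0 on (0,a), λ > 0, and the boundary term satisfies lim_{s→0⁺} |φ'(s)|^(p-2) θ(s)^(N-1) φ'(s) = 0. If φ(s) > 0 on (0,a), then φ'(s) < 0 on (0,a). -/
open Set Filter

/-- If `φ` solves `(|φ'|^(p-2) θ^(N-1) φ')' + λ θ^(N-1) |φ|^(p-2) φ = 0` on `(0,a)` with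
`θ > 0`, `λ > 0`, `1 < p`, boundary term tending to `0` at `0⁺`, and `φ > 0` on `(0,a)`,
then `φ' < 0` on `(0,a)`. -/
theorem stmt_0 (p lam a : ℝ) (N : ℕ) (hN : 1 ≤ N)
    (φ φ' θ : ℝ → ℝ)
    (hp : 1 < p) (hlam : 0 < lam) (ha : 0 < a)
    (hθpos : ∀ s ∈ Ioo 0 a, 0 < θ s)
    (hderiv : ∀ s ∈ Ioo 0 a, HasDerivAt φ (φ' s) s)
    (hode : ∀ s ∈ Ioo 0 a,
      HasDerivAt (fun s => |φ' s| ^ (p - 2) * θ s ^ (N - 1) * φ' s)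
        (-(lam * θ s ^ (N - 1) * |φ s| ^ (p - 2) * φ s)) s)
    (hbdry : Tendsto (fun s => |φ' s| ^ (p - 2) * θ s ^ (N - 1) * φ' s)
        (nhdsWithin 0 (Ioi 0)) (nhds 0))
    (hφpos : ∀ s ∈ Ioo 0 a, 0 < φ s) :
    ∀ s ∈ Ioo 0 a, φ' s < 0 := by
  set W : ℝ → ℝ := fun s => |φ' s| ^ (p - 2) * θ s ^ (N - 1) * φ' s with hWdef
  have hanti : StrictAntiOn W (Ioo 0 a) := by
    apply strictAntiOn_of_deriv_neg (convex_Ioo 0 a)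
    · exact fun s hs => (hode s hs).continuousAt.continuousWithinAt
    · intro s hs
      rw [interior_Ioo] at hs
      rw [(hode s hs).deriv]
      have h1 : (0:ℝ) < θ s ^ (N - 1) := pow_pos (hθpos s hs) (N - 1)
      have h2 := hφpos s hs
      have h3 : (0:ℝ) < |φ s| ^ (p - 2) :=
        Real.rpow_pos_of_pos (abs_pos.mpr h2.ne') (p - 2)
      nlinarith [mul_pos (mul_pos (mul_pos hlam h1) h3) h2]
  have hWneg : ∀ s ∈ Ioo 0 a, W s < 0 := by
    rintro s ⟨hs0, hsa⟩
    have ht : s / 2 ∈ Ioo 0 a := ⟨by linarith, by linarith⟩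
    have hts : W s < W (s / 2) := hanti ht ⟨hs0, hsa⟩ (by linarith)
    have hWt : W (s / 2) ≤ 0 := by
      refine ge_of_tendsto hbdry ?_
      have hmem : Ioo (0:ℝ) (s / 2) ∈ nhdsWithin (0:ℝ) (Ioi 0) :=
        Ioo_mem_nhdsGT_of_mem ⟨le_refl 0, by linarith⟩
      filter_upwards [hmem] with u hu
      exact le_of_lt (hanti ⟨hu.1, by linarith [hu.2]⟩ ht hu.2)
    linarith
  rintro s hs
  have hW := hWneg s hs
  by_contra h
  push_neg at h
  rcases lt_or_eq_of_le h with hlt | heq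
  · have h1 : (0:ℝ) < θ s ^ (N - 1) := pow_pos (hθpos s hs) (N - 1)
    have h3 : (0:ℝ) < |φ' s| ^ (p - 2) :=
      Real.rpow_pos_of_pos (abs_pos.mpr hlt.ne') (p - 2)
    have : 0 < W s := mul_pos (mul_pos h3 h1) hlt
    linarith
  · have : W s = 0 := by simp [hWdef, ← heq]
    linarith
end

section
/- (Hardy–Littlewood inequality.) Let f, g : ℝ^N → [0,∞) be measurable functions vanishing at infinity, and let f*, g* denote their symmetric decreasing rearrangements. Then ∫_{ℝ^N} f(x) g(x) dx ≤ ∫_{ℝ^N} f*(x) g*(x) dx. -/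
open Set MeasureTheory

/-- Layer-cake representation of the integral of a product of two nonnegative
functions as a double integral of measures of intersections of superlevel sets. -/
lemma layercake_mul {E : Type*} [MeasurableSpace E] (μ : Measure E) [SigmaFinite μ]
    (f g : E → ℝ) (hf : Measurable f) (hg : Measurable g)
    (hf0 : ∀ x, 0 ≤ f x) (hg0 : ∀ x, 0 ≤ g x) :
    ∫⁻ x, ENNReal.ofReal (f x * g x) ∂μ
      = ∫⁻ p : ℝ × ℝ, μ {x | 0 < p.1 ∧ p.1 < f x ∧ 0 < p.2 ∧ p.2 < g x} := by
  set S : Set (E × (ℝ × ℝ)) :=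
    {q | (0 < q.2.1 ∧ q.2.1 < f q.1) ∧ (0 < q.2.2 ∧ q.2.2 < g q.1)} with hSdef
  have hS : MeasurableSet S := by
    apply MeasurableSet.inter
    · exact (measurableSet_lt measurable_const measurable_snd.fst).inter
        (measurableSet_lt measurable_snd.fst (hf.comp measurable_fst))
    · exact (measurableSet_lt measurable_const measurable_snd.snd).inter
        (measurableSet_lt measurable_snd.snd (hg.comp measurable_fst))
  have step1 : ∫⁻ x, ENNReal.ofReal (f x * g x) ∂μ
      = ∫⁻ x, (volume : Measure (ℝ × ℝ)) (Prod.mk x ⁻¹' S) ∂μ := by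
    refine lintegral_congr fun x => ?_
    have hpre : Prod.mk x ⁻¹' S = Ioo 0 (f x) ×ˢ Ioo 0 (g x) := by
      ext p
      simp [hSdef, Set.mem_Ioo, and_assoc]
    rw [hpre, Measure.volume_eq_prod, Measure.prod_prod, Real.volume_Ioo, Real.volume_Ioo,
      sub_zero, sub_zero, ← ENNReal.ofReal_mul (hf0 x)]
  rw [step1, ← Measure.prod_apply hS, Measure.prod_apply_symm hS]
  refine lintegral_congr fun p => ?_
  congr 1
  ext x
  simp [hSdef, and_assoc]

/-- Hardy–Littlewood inequality: for nonnegative measurable `f, g` vanishing at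
infinity with symmetric decreasing rearrangements `f*, g*` (radially symmetric with
superlevel sets that are balls centred at the origin, equimeasurable with `f, g`),
one has `∫ f g ≤ ∫ f* g*`. -/
theorem stmt_6 (N : ℕ)
    (f g fstar gstar : EuclideanSpace ℝ (Fin N) → ℝ)
    (hf : Measurable f) (hg : Measurable g)
    (hfstar : Measurable fstar) (hgstar : Measurable gstar)
    (hfnonneg : ∀ x, 0 ≤ f x) (hgnonneg : ∀ x, 0 ≤ g x)
    (hfstarnonneg : ∀ x, 0 ≤ fstar x) (hgstarnonneg : ∀ x, 0 ≤ gstar x)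
    (hfvanish : ∀ t : ℝ, 0 < t → volume {x | t < f x} < ⊤)
    (hgvanish : ∀ t : ℝ, 0 < t → volume {x | t < g x} < ⊤)
    (hfball : ∀ t : ℝ, 0 < t → ∃ r : ℝ,
      {x | t < fstar x} = Metric.ball (0 : EuclideanSpace ℝ (Fin N)) r)
    (hgball : ∀ t : ℝ, 0 < t → ∃ r : ℝ,
      {x | t < gstar x} = Metric.ball (0 : EuclideanSpace ℝ (Fin N)) r)
    (hfequi : ∀ t : ℝ, 0 < t → volume {x | t < fstar x} = volume {x | t < f x})
    (hgequi : ∀ t : ℝ, 0 < t → volume {x | t < gstar x} = volume {x | t < g x}) :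
    ∫⁻ x, ENNReal.ofReal (f x * g x) ≤ ∫⁻ x, ENNReal.ofReal (fstar x * gstar x) := by
  rw [layercake_mul volume f g hf hg hfnonneg hgnonneg,
    layercake_mul volume fstar gstar hfstar hgstar hfstarnonneg hgstarnonneg]
  refine lintegral_mono fun p => ?_
  by_cases hs : 0 < p.1
  · by_cases ht : 0 < p.2
    · obtain ⟨r1, hr1⟩ := hfball p.1 hs
      obtain ⟨r2, hr2⟩ := hgball p.2 ht
      have hE1 : {x | 0 < p.1 ∧ p.1 < f x ∧ 0 < p.2 ∧ p.2 < g x}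
          = {x | p.1 < f x} ∩ {x | p.2 < g x} := by
        ext x; simp [hs, ht, and_assoc]
      have hE2 : {x | 0 < p.1 ∧ p.1 < fstar x ∧ 0 < p.2 ∧ p.2 < gstar x}
          = {x | p.1 < fstar x} ∩ {x | p.2 < gstar x} := by
        ext x; simp [hs, ht, and_assoc]
      rw [hE1, hE2, hr1, hr2]
      have hball : Metric.ball (0 : EuclideanSpace ℝ (Fin N)) r1 ∩ Metric.ball 0 r2
          = Metric.ball 0 (min r1 r2) := by
        ext x; simp [lt_min_iff]
      rw [hball]
      have hminvol : volume (Metric.ball (0 : EuclideanSpace ℝ (Fin N)) (min r1 r2))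
          = min (volume (Metric.ball (0 : EuclideanSpace ℝ (Fin N)) r1))
              (volume (Metric.ball (0 : EuclideanSpace ℝ (Fin N)) r2)) := by
        rcases le_total r1 r2 with h | h
        · rw [min_eq_left h, min_eq_left (measure_mono (Metric.ball_subset_ball h))]
        · rw [min_eq_right h, min_eq_right (measure_mono (Metric.ball_subset_ball h))]
      rw [hminvol, ← hr1, ← hr2, hfequi p.1 hs, hgequi p.2 ht, le_min_iff]
      exact ⟨measure_mono inter_subset_left, measure_mono inter_subset_right⟩
    · have : {x : EuclideanSpace ℝ (Fin N) | 0 < p.1 ∧ p.1 < f x ∧ 0 < p.2 ∧ p.2 < g x}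
          = ∅ := by
        ext x; simp [ht]
      simp [this]
  · have : {x : EuclideanSpace ℝ (Fin N) | 0 < p.1 ∧ p.1 < f x ∧ 0 < p.2 ∧ p.2 < g x}
        = ∅ := by
      ext x; simp [hs]
    simp [this]
end
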